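/- For any tree T with maximum vertex degree Δ and adjacency matrix A, √Δ ≤ λ₁(A) ≤ 2√(Δ−1). -/

import Mathlib

open Matrix

section Aux

variable {V : Type*} [Fintype V] [DecidableEq V]

lemma rayleighLe {A : Matrix V V ℝ} (hA : A.IsHermitian)
    (hbdd : BddAbove (spectrum ℝ A)) (x : V → ℝ) :
    x ⬝ᵥ (A *ᵥ x) ≤ sSup (spectrum ℝ A) * (x ⬝ᵥ x) := by
  set U : Matrix V V ℝ := (hA.eigenvectorUnitary : Matrix V V ℝ) with hUdef
  have hU : U * star U = 1 := Matrix.mem_unitaryGroup_iff.mp hA.eigenvectorUnitary.2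
  set c : V → ℝ := star U *ᵥ x with hc
  have hvm : x ᵥ* U = c := by
    rw [hc, Matrix.star_eq_conjTranspose, ← Matrix.mulVec_transpose]
    simp
  have h1 : x ⬝ᵥ (A *ᵥ x) = ∑ i, hA.eigenvalues i * (c i)^2 := by
    conv_lhs => rw [hA.spectral_theorem, Unitary.conjStarAlgAut_apply]
    rw [← Matrix.mulVec_mulVec, ← Matrix.mulVec_mulVec, Matrix.dotProduct_mulVec, hvm, ← hUdef,
      ← hc]
    simp only [dotProduct, Matrix.mulVec_diagonal]
    exact Finset.sum_congr rfl fun i _ => by simp; ring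
  have h2 : x ⬝ᵥ x = ∑ i, (c i)^2 := by
    have : c ⬝ᵥ c = x ⬝ᵥ x :=
      calc c ⬝ᵥ c = (x ᵥ* U) ⬝ᵥ c := by rw [hvm]
        _ = x ⬝ᵥ (U *ᵥ c) := (Matrix.dotProduct_mulVec x U c).symm
        _ = x ⬝ᵥ x := by rw [hc, Matrix.mulVec_mulVec, hU, Matrix.one_mulVec]
    rw [← this]
    exact Finset.sum_congr rfl fun i _ => (sq (c i)).symm
  rw [h1, h2, Finset.mul_sum]
  refine Finset.sum_le_sum fun i _ => ?_
  have hle : hA.eigenvalues i ≤ sSup (spectrum ℝ A) :=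
    le_csSup hbdd (hA.eigenvalues_mem_spectrum_real i)
  exact mul_le_mul_of_nonneg_right hle (sq_nonneg _)

lemma specBound {A : Matrix V V ℝ} (hA : A.IsHermitian)
    (hnn : ∀ i j, 0 ≤ A i j) {x : V → ℝ} (hx : ∀ v, 0 < x v) {c : ℝ}
    (hc : ∀ v, (A *ᵥ x) v ≤ c * x v) {l : ℝ} (hl : l ∈ spectrum ℝ A) : l ≤ c := by
  rw [spectrum.mem_iff] at hl
  have hdet : (algebraMap ℝ (Matrix V V ℝ) l - A).det = 0 := by
    by_contra h
    exact hl ((Matrix.isUnit_iff_isUnit_det _).mpr (isUnit_iff_ne_zero.mpr h))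
  obtain ⟨y, hy0, hy⟩ := (Matrix.exists_mulVec_eq_zero_iff).mpr hdet
  have hAy : A *ᵥ y = l • y := by
    have h1 : (algebraMap ℝ (Matrix V V ℝ) l - A) *ᵥ y = l • y - A *ᵥ y := by
      rw [Matrix.sub_mulVec, Matrix.algebraMap_eq_diagonal]
      congr 1
      ext i
      simp [Matrix.mulVec_diagonal, Pi.algebraMap_apply]
    rw [h1] at hy
    rw [eq_comm, ← sub_eq_zero, hy]
  set z : V → ℝ := fun v => |y v| with hz
  have hptw : ∀ v, l * z v ≤ (A *ᵥ z) v := by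
    intro v
    have h1 : l * z v = |l * y v| ∨ l * z v ≤ 0 := by
      rcases le_or_gt 0 l with h | h
      · exact Or.inl (by rw [abs_mul, abs_of_nonneg h])
      · exact Or.inr (mul_nonpos_of_nonpos_of_nonneg h.le (abs_nonneg _))
    have h2 : |l * y v| ≤ (A *ᵥ z) v := by
      have : l * y v = (A *ᵥ y) v := by rw [hAy]; simp
      rw [this, Matrix.mulVec, dotProduct]
      refine (Finset.abs_sum_le_sum_abs _ _).trans ?_
      refine Finset.sum_le_sum fun u _ => ?_
      rw [abs_mul, abs_of_nonneg (hnn v u)]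
    have h3 : 0 ≤ (A *ᵥ z) v :=
      Finset.sum_nonneg fun u _ => mul_nonneg (hnn v u) (abs_nonneg _)
    rcases h1 with h | h
    · rw [h]; exact h2
    · exact h.trans h3
  have hS : 0 < x ⬝ᵥ z := by
    obtain ⟨v, hv⟩ := Function.ne_iff.mp hy0
    refine Finset.sum_pos' (fun u _ => mul_nonneg (hx u).le (abs_nonneg _))
      ⟨v, Finset.mem_univ v, mul_pos (hx v) (abs_pos.mpr hv)⟩
  have key : l * (x ⬝ᵥ z) ≤ c * (x ⬝ᵥ z) := by
    have h4 : l * (x ⬝ᵥ z) ≤ x ⬝ᵥ (A *ᵥ z) := by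
      rw [dotProduct, dotProduct, Finset.mul_sum]
      refine Finset.sum_le_sum fun v _ => ?_
      rw [mul_left_comm]
      exact mul_le_mul_of_nonneg_left (hptw v) (hx v).le
    have h5 : x ⬝ᵥ (A *ᵥ z) = (A *ᵥ x) ⬝ᵥ z := by
      have hAT : Aᵀ = A := by
        ext i j
        rw [Matrix.transpose_apply]
        conv_rhs => rw [← hA]
        simp [Matrix.conjTranspose_apply]
      rw [Matrix.dotProduct_mulVec, ← Matrix.mulVec_transpose, hAT]
    have h6 : (A *ᵥ x) ⬝ᵥ z ≤ c * (x ⬝ᵥ z) := by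
      rw [dotProduct, dotProduct, Finset.mul_sum]
      refine Finset.sum_le_sum fun v _ => ?_
      rw [← mul_assoc]
      exact mul_le_mul_of_nonneg_right (hc v) (abs_nonneg _)
    exact (h4.trans_eq h5).trans h6
  exact le_of_mul_le_mul_right key hS

open SimpleGraph Walk in
lemma tree_dist_ne {T : SimpleGraph V} (hT : T.IsTree) (r : V) {u v : V} (h : T.Adj u v) :
    T.dist r u ≠ T.dist r v := by
  intro heq
  obtain ⟨p, hp, hpl⟩ := (hT.isConnected.preconnected r u).exists_path_of_dist
  have hvp : v ∉ p.support := by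
    intro hv
    have h1 : T.dist r v ≤ (p.takeUntil v hv).length := SimpleGraph.dist_le _
    have h2 : (p.takeUntil v hv).length + (p.dropUntil v hv).length = p.length := by
      rw [← Walk.length_append, p.take_spec hv]
    have h3 : T.dist v u ≤ (p.dropUntil v hv).length := SimpleGraph.dist_le _
    have h4 : T.dist v u = 1 := by rw [SimpleGraph.dist_eq_one_iff_adj]; exact h.symm
    omega
  have hq_path : (p.concat h).IsPath := by
    rw [← Walk.isPath_reverse_iff, Walk.reverse_concat]
    exact (hp.reverse).cons (by simpa [Walk.support_reverse] using hvp)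
  obtain ⟨q, hqp, hql⟩ := (hT.isConnected.preconnected r v).exists_path_of_dist
  have heqw : p.concat h = q :=
    ExistsUnique.unique (hT.existsUnique_path r v) hq_path hqp
  have hlen : (p.concat h).length = q.length := by rw [heqw]
  rw [Walk.length_concat] at hlen
  omega

open SimpleGraph Walk in
lemma tree_dist_adj {T : SimpleGraph V} (hT : T.IsTree) (r : V) {u v : V} (h : T.Adj u v) :
    T.dist r u + 1 = T.dist r v ∨ T.dist r v + 1 = T.dist r u := by
  have h1 : T.dist r v ≤ T.dist r u + T.dist u v := hT.isConnected.dist_triangle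
  have h2 : T.dist r u ≤ T.dist r v + T.dist v u := hT.isConnected.dist_triangle
  have h3 : T.dist u v = 1 := by rw [SimpleGraph.dist_eq_one_iff_adj]; exact h
  have h4 : T.dist v u = 1 := by rw [SimpleGraph.dist_eq_one_iff_adj]; exact h.symm
  have h5 := tree_dist_ne hT r h
  omega

open SimpleGraph Walk in
lemma tree_parent_unique {T : SimpleGraph V} (hT : T.IsTree) (r : V) {v u₁ u₂ : V}
    (h1 : T.Adj u₁ v) (h2 : T.Adj u₂ v) (d1 : T.dist r u₁ + 1 = T.dist r v)
    (d2 : T.dist r u₂ + 1 = T.dist r v) : u₁ = u₂ := by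
  obtain ⟨p₁, hp₁, hpl₁⟩ := (hT.isConnected.preconnected r u₁).exists_path_of_dist
  obtain ⟨p₂, hp₂, hpl₂⟩ := (hT.isConnected.preconnected r u₂).exists_path_of_dist
  have hv₁ : v ∉ p₁.support := by
    intro hv
    have := Walk.length_takeUntil_le p₁ hv
    have := SimpleGraph.dist_le (p₁.takeUntil v hv)
    omega
  have hv₂ : v ∉ p₂.support := by
    intro hv
    have := Walk.length_takeUntil_le p₂ hv
    have := SimpleGraph.dist_le (p₂.takeUntil v hv)
    omega
  have hw₁ : (p₁.concat h1).IsPath := by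
    rw [← Walk.isPath_reverse_iff, Walk.reverse_concat]
    exact (hp₁.reverse).cons (by simpa [Walk.support_reverse] using hv₁)
  have hw₂ : (p₂.concat h2).IsPath := by
    rw [← Walk.isPath_reverse_iff, Walk.reverse_concat]
    exact (hp₂.reverse).cons (by simpa [Walk.support_reverse] using hv₂)
  have heqw : p₁.concat h1 = p₂.concat h2 :=
    ExistsUnique.unique (hT.existsUnique_path r v) hw₁ hw₂
  have hs := congrArg Walk.support (congrArg Walk.reverse heqw)
  rw [Walk.reverse_concat, Walk.reverse_concat, Walk.support_cons, Walk.support_cons,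
    Walk.support_eq_cons p₁.reverse, Walk.support_eq_cons p₂.reverse] at hs
  simp only [List.cons.injEq] at hs
  exact hs.2.1

end Aux

theorem stmt19 {V : Type*} [Fintype V] [DecidableEq V]
    (T : SimpleGraph V) [DecidableRel T.Adj] (hT : T.IsTree)
    (hΔ : 2 ≤ T.maxDegree) :
    Real.sqrt (T.maxDegree : ℝ) ≤ sSup (spectrum ℝ (T.adjMatrix ℝ)) ∧
    sSup (spectrum ℝ (T.adjMatrix ℝ)) ≤ 2 * Real.sqrt ((T.maxDegree : ℝ) - 1) := by
  haveI : Nonempty V := hT.isConnected.nonempty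
  set A := T.adjMatrix ℝ with hAdef
  have hA : A.IsHermitian := by
    ext i j
    simp only [Matrix.conjTranspose_apply, star_trivial, hAdef, SimpleGraph.adjMatrix_apply]
    simp [SimpleGraph.adj_comm]
  have hnn : ∀ i j, 0 ≤ A i j := by
    intro i j
    rw [hAdef]
    simp only [SimpleGraph.adjMatrix_apply]
    split <;> norm_num
  obtain ⟨r, hr⟩ := T.exists_maximal_degree_vertex
  set Δ := T.maxDegree with hΔdef
  have hΔR : (2:ℝ) ≤ (Δ:ℝ) := by exact_mod_cast hΔ
  set t := Real.sqrt ((Δ:ℝ) - 1) with htdef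
  have ht1 : (1:ℝ) ≤ t := by
    have h1 : Real.sqrt 1 ≤ t := Real.sqrt_le_sqrt (by linarith)
    simpa using h1
  have ht0 : (0:ℝ) < t := lt_of_lt_of_le one_pos ht1
  have hsq : t^2 = (Δ:ℝ) - 1 := Real.sq_sqrt (by linarith)
  set s := t⁻¹ with hsdef
  have hs0 : (0:ℝ) < s := inv_pos.mpr ht0
  have hts : t * s = 1 := mul_inv_cancel₀ ht0.ne'
  set x : V → ℝ := fun v => s ^ (T.dist r v) with hxdef
  have hx : ∀ v, 0 < x v := fun v => pow_pos hs0 _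
  have hkey : ∀ v, (A *ᵥ x) v ≤ (2*t) * x v := by
    intro v
    rw [hAdef, SimpleGraph.adjMatrix_mulVec_apply]
    set k := T.dist r v with hk
    set N := T.neighborFinset v with hN
    set P := N.filter (fun u => T.dist r u + 1 = k) with hP
    set C := N.filter (fun u => ¬(T.dist r u + 1 = k)) with hC
    have hpow : (0:ℝ) < s ^ k := pow_pos hs0 _
    have hcard : P.card ≤ 1 := by
      rw [Finset.card_le_one]
      intro a ha b hb
      rw [hP, Finset.mem_filter] at ha hb
      exact tree_parent_unique hT r ((T.mem_neighborFinset v a).mp ha.1).symm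
        ((T.mem_neighborFinset v b).mp hb.1).symm ha.2 hb.2
    have hPval : ∀ u ∈ P, x u = t * s ^ k := by
      intro u hu
      rw [hP, Finset.mem_filter] at hu
      rw [hxdef]
      dsimp only
      rw [← hu.2, pow_succ]
      have : t * (s ^ T.dist r u * s) = s ^ T.dist r u * (t * s) := by ring
      rw [this, hts, mul_one]
    have hCval : ∀ u ∈ C, x u = s * s ^ k := by
      intro u hu
      rw [hC, Finset.mem_filter] at hu
      have hadj : T.Adj v u := (T.mem_neighborFinset v u).mp hu.1
      have hdu : k + 1 = T.dist r u := by
        rcases tree_dist_adj hT r hadj.symm with h | h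
        · exact absurd h hu.2
        · exact h
      rw [hxdef]
      dsimp only
      rw [← hdu, pow_succ]
      ring
    have hsplit : ∑ u ∈ N, x u = ∑ u ∈ P, x u + ∑ u ∈ C, x u :=
      (Finset.sum_filter_add_sum_filter_not N _ x).symm
    have hPsum : ∑ u ∈ P, x u = (P.card : ℝ) * (t * s ^ k) := by
      rw [Finset.sum_congr rfl hPval, Finset.sum_const, nsmul_eq_mul]
    have hCsum : ∑ u ∈ C, x u = (C.card : ℝ) * (s * s ^ k) := by
      rw [Finset.sum_congr rfl hCval, Finset.sum_const, nsmul_eq_mul]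
    have hcards : P.card + C.card = N.card :=
      Finset.card_filter_add_card_filter_not _
    have hNΔ : N.card ≤ Δ := by
      rw [hN, T.card_neighborFinset_eq_degree]
      exact T.degree_le_maxDegree v
    have hxv : x v = s ^ k := by rw [hxdef]
    rw [hsplit, hPsum, hCsum, hxv]
    interval_cases h : P.card
    · have hCR : (C.card : ℝ) ≤ (Δ:ℝ) := by
        have : C.card ≤ Δ := by omega
        exact_mod_cast this
      have h1 : (C.card : ℝ) * (s * s ^ k) ≤ (Δ:ℝ) * (s * s ^ k) :=
        mul_le_mul_of_nonneg_right hCR (by positivity)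
      have h2 : (Δ:ℝ) * (s * s ^ k) ≤ 2 * t * s ^ k := by
        have hΔ2 : (Δ:ℝ) ≤ 2 * t^2 := by rw [hsq]; linarith
        calc (Δ:ℝ) * (s * s ^ k) ≤ (2 * t^2) * (s * s ^ k) :=
              mul_le_mul_of_nonneg_right hΔ2 (by positivity)
          _ = 2 * t * (t * s) * s ^ k := by ring
          _ = 2 * t * s ^ k := by rw [hts]; ring
      push_cast
      linarith
    · have hCR : (C.card : ℝ) ≤ (Δ:ℝ) - 1 := by
        have h1 : C.card + 1 ≤ Δ := by omega
        have : ((C.card + 1 : ℕ) : ℝ) ≤ (Δ:ℝ) := by exact_mod_cast h1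
        push_cast at this
        linarith
      have h1 : (C.card : ℝ) * (s * s ^ k) ≤ ((Δ:ℝ) - 1) * (s * s ^ k) :=
        mul_le_mul_of_nonneg_right hCR (by positivity)
      have h2 : ((Δ:ℝ) - 1) * (s * s ^ k) = t * s ^ k := by
        rw [← hsq]
        calc t^2 * (s * s ^ k) = t * (t * s) * s ^ k := by ring
          _ = t * s ^ k := by rw [hts]; ring
      push_cast
      linarith
  have hub : ∀ l ∈ spectrum ℝ A, l ≤ 2 * t := fun l hl =>
    specBound hA hnn hx hkey hl
  have hbdd : BddAbove (spectrum ℝ A) := ⟨2 * t, fun l hl => hub l hl⟩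
  have hupper : sSup (spectrum ℝ A) ≤ 2 * t := Real.sSup_le hub (by positivity)
  refine ⟨?_, hupper⟩
  -- lower bound
  set y : V → ℝ := fun u => if u = r then Real.sqrt (Δ:ℝ) else if T.Adj r u then 1 else 0
    with hydef
  have hynn : ∀ u, 0 ≤ y u := by
    intro u
    rw [hydef]
    dsimp only
    split_ifs <;> positivity
  have hdegr : (T.neighborFinset r).card = Δ := by
    rw [T.card_neighborFinset_eq_degree, hr]
  have hyrr : y r = Real.sqrt (Δ:ℝ) := by simp [hydef]
  have hyy : y ⬝ᵥ y = 2 * (Δ:ℝ) := by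
    rw [dotProduct, ← Finset.add_sum_erase _ _ (Finset.mem_univ r)]
    have h1 : y r * y r = (Δ:ℝ) := by
      rw [hyrr]
      exact Real.mul_self_sqrt (by positivity)
    have h2 : ∑ u ∈ Finset.univ.erase r, y u * y u = (Δ:ℝ) := by
      have hterm : ∀ u ∈ Finset.univ.erase r, y u * y u = if T.Adj r u then (1:ℝ) else 0 := by
        intro u hu
        have hun : u ≠ r := (Finset.mem_erase.mp hu).1
        rw [hydef]
        simp only [if_neg hun]
        split <;> norm_num
      rw [Finset.sum_congr rfl hterm, Finset.sum_erase _ (by simp)]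
      rw [Finset.sum_boole]
      rw [← SimpleGraph.neighborFinset_eq_filter, hdegr]
    rw [h1, h2]; ring
  have hyr : ∀ u ∈ T.neighborFinset r, y u = 1 := by
    intro u hu
    have hadj : T.Adj r u := (T.mem_neighborFinset r u).mp hu
    rw [hydef]
    simp only [if_neg hadj.ne', if_pos hadj]
  have hyAy : 2 * (Δ:ℝ) * Real.sqrt (Δ:ℝ) ≤ y ⬝ᵥ (A *ᵥ y) := by
    have hAynn : ∀ u, 0 ≤ (A *ᵥ y) u := by
      intro u
      rw [hAdef, SimpleGraph.adjMatrix_mulVec_apply]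
      exact Finset.sum_nonneg fun w _ => hynn w
    have hrnot : r ∉ T.neighborFinset r := by simp
    have hsub : insert r (T.neighborFinset r) ⊆ Finset.univ := Finset.subset_univ _
    have hbig : ∑ u ∈ insert r (T.neighborFinset r), y u * (A *ᵥ y) u ≤ y ⬝ᵥ (A *ᵥ y) := by
      rw [dotProduct]
      exact Finset.sum_le_sum_of_subset_of_nonneg hsub
        (fun u _ _ => mul_nonneg (hynn u) (hAynn u))
    rw [Finset.sum_insert hrnot] at hbig
    have hgr : y r * (A *ᵥ y) r = (Δ:ℝ) * Real.sqrt (Δ:ℝ) := by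
      rw [hAdef, SimpleGraph.adjMatrix_mulVec_apply, Finset.sum_congr rfl hyr,
        Finset.sum_const, hdegr, nsmul_eq_mul, mul_one]
      rw [hyrr]
      ring
    have hgn : ∀ v ∈ T.neighborFinset r, Real.sqrt (Δ:ℝ) ≤ y v * (A *ᵥ y) v := by
      intro v hv
      have hadj : T.Adj r v := (T.mem_neighborFinset r v).mp hv
      rw [hyr v hv, one_mul, hAdef, SimpleGraph.adjMatrix_mulVec_apply]
      have hrmem : r ∈ T.neighborFinset v := (T.mem_neighborFinset v r).mpr hadj.symm
      have := Finset.single_le_sum (f := y) (fun u _ => hynn u) hrmem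
      linarith [hyrr ▸ this]
    have hsumn : (Δ:ℝ) * Real.sqrt (Δ:ℝ) ≤ ∑ v ∈ T.neighborFinset r, y v * (A *ᵥ y) v := by
      calc (Δ:ℝ) * Real.sqrt (Δ:ℝ) = ∑ _v ∈ T.neighborFinset r, Real.sqrt (Δ:ℝ) := by
            rw [Finset.sum_const, hdegr, nsmul_eq_mul]
        _ ≤ _ := Finset.sum_le_sum hgn
    linarith
  have hR := rayleighLe hA hbdd y
  rw [hyy] at hR
  have h2Δ : (0:ℝ) < 2 * (Δ:ℝ) := by linarith
  have hfin : Real.sqrt (Δ:ℝ) * (2 * (Δ:ℝ)) ≤ sSup (spectrum ℝ A) * (2 * (Δ:ℝ)) := by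
    nlinarith [hyAy, hR]
  exact le_of_mul_le_mul_right hfin h2Δ
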